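/- Let A ∈ ℝ^{n×n}, B ∈ ℝ^{n×m}, B₁ ∈ ℝ^{n×p}, with (A,B) a controllable pair and the column space of B contained in the column space of B₁, and let Σ be a symmetric positive definite n×n matrix. Then there exists K ∈ ℝ^{m×n} such that A − BK is Hurwitz and (A − BK)Σ + Σ(A − BK)ᵀ + B₁B₁ᵀ = 0 if and only if there exists X ∈ ℝ^{n×m} such that AΣ + ΣAᵀ + B₁B₁ᵀ + BXᵀ + XBᵀ = 0. -/

import Mathlib

open Matrix

/-- The controllability matrix `[B, AB, A²B, …, A^{n−1}B]` (columns indexed by `Fin n × Fin m`). -/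
def ctrbMatrix {n m : ℕ} (A : Matrix (Fin n) (Fin n) ℝ) (B : Matrix (Fin n) (Fin m) ℝ) :
    Matrix (Fin n) (Fin n × Fin m) ℝ :=
  Matrix.of fun i p => ((A ^ (p.1 : ℕ)) * B) i p.2

/-- `(A,B)` is a controllable pair iff the controllability matrix has rank `n`. -/
def IsControllablePair {n m : ℕ} (A : Matrix (Fin n) (Fin n) ℝ)
    (B : Matrix (Fin n) (Fin m) ℝ) : Prop :=
  (ctrbMatrix A B).rank = n

/-- A real square matrix is Hurwitz iff all its (complex) eigenvalues have negative real part. -/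
def IsHurwitz {n : ℕ} (F : Matrix (Fin n) (Fin n) ℝ) : Prop :=
  ∀ μ ∈ spectrum ℂ (F.map (algebraMap ℝ ℂ)), μ.re < 0

/-! ### Auxiliary lemmas -/

lemma rank_lt_of_kernel {k : ℕ} {ι : Type*} [Fintype ι] (M : Matrix ι (Fin k) ℝ)
    {x : Fin k → ℝ} (hx : x ≠ 0) (hMx : M *ᵥ x = 0) : M.rank < k := by
  have h := M.mulVecLin.finrank_range_add_finrank_ker
  have hker : 0 < Module.finrank ℝ (LinearMap.ker M.mulVecLin) := by
    rw [Module.finrank_pos_iff_exists_ne_zero]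
    exact ⟨⟨x, by simpa [Matrix.mulVecLin] using hMx⟩, by simpa [Subtype.ext_iff] using hx⟩
  have hdom : Module.finrank ℝ (Fin k → ℝ) = k := by simp
  rw [hdom] at h
  have : M.rank = Module.finrank ℝ (LinearMap.range M.mulVecLin) := rfl
  omega

noncomputable def cm {k l : ℕ} (M : Matrix (Fin k) (Fin l) ℝ) : Matrix (Fin k) (Fin l) ℂ :=
  M.map (algebraMap ℝ ℂ)

lemma cm_mul {k l r : ℕ} (M : Matrix (Fin k) (Fin l) ℝ) (N : Matrix (Fin l) (Fin r) ℝ) :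
    cm (M * N) = cm M * cm N := by
  exact Matrix.map_mul (f := algebraMap ℝ ℂ)

lemma cm_transpose {k l : ℕ} (M : Matrix (Fin k) (Fin l) ℝ) : cm Mᵀ = (cm M)ᵀ := by
  ext i j; simp [cm]

lemma cm_add {k l : ℕ} (M N : Matrix (Fin k) (Fin l) ℝ) : cm (M + N) = cm M + cm N := by
  ext i j; simp [cm]

lemma cm_zero {k l : ℕ} : cm (0 : Matrix (Fin k) (Fin l) ℝ) = 0 := by
  ext i j; simp [cm]

lemma cm_pow {k : ℕ} (M : Matrix (Fin k) (Fin k) ℝ) (r : ℕ) : cm (M ^ r) = (cm M) ^ r := by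
  induction r with
  | zero => ext i j; simp [cm, Matrix.one_apply]; split <;> simp
  | succ r ih => rw [pow_succ, pow_succ, cm_mul, ih]

lemma cm_star_mulVec {k l : ℕ} (M : Matrix (Fin k) (Fin l) ℝ) (v : Fin l → ℂ) :
    (cm M) *ᵥ (star v) = star ((cm M) *ᵥ v) := by
  ext i
  simp [cm, mulVec, dotProduct, map_sum, Complex.conj_ofReal, mul_comm]

lemma exists_eigvec {k : ℕ} (F : Matrix (Fin k) (Fin k) ℝ) {μ : ℂ}
    (hμ : μ ∈ spectrum ℂ (F.map (algebraMap ℝ ℂ))) :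
    ∃ v : Fin k → ℂ, v ≠ 0 ∧ (cm F)ᵀ *ᵥ v = μ • v := by
  rw [spectrum.mem_iff] at hμ
  have hdet : (μ • (1 : Matrix (Fin k) (Fin k) ℂ) - cm F).det = 0 := by
    by_contra hd
    exact hμ (by
      rw [Algebra.algebraMap_eq_smul_one]
      exact (Matrix.isUnit_iff_isUnit_det _).2 (isUnit_iff_ne_zero.2 hd))
  have hdetT : (μ • (1 : Matrix (Fin k) (Fin k) ℂ) - (cm F)ᵀ).det = 0 := by
    have h2 : (μ • (1 : Matrix (Fin k) (Fin k) ℂ) - cm F)ᵀ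
        = μ • (1 : Matrix (Fin k) (Fin k) ℂ) - (cm F)ᵀ := by
      simp [transpose_sub, transpose_smul]
    rw [← h2, Matrix.det_transpose]; exact hdet
  obtain ⟨v, hv, hv0⟩ := (Matrix.exists_mulVec_eq_zero_iff).2 hdetT
  refine ⟨v, hv, ?_⟩
  rw [sub_mulVec, smul_mulVec, one_mulVec, sub_eq_zero] at hv0
  exact hv0.symm

/-- The key spectral lemma. -/
lemma hurwitz_of_lyap {n m p : ℕ} (A : Matrix (Fin n) (Fin n) ℝ) (B : Matrix (Fin n) (Fin m) ℝ)
    (B₁ : Matrix (Fin n) (Fin p) ℝ) (hAB : IsControllablePair A B)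
    (U : Matrix (Fin p) (Fin m) ℝ) (hBU : B = B₁ * U)
    (S : Matrix (Fin n) (Fin n) ℝ) (hS : S.PosDef) (K : Matrix (Fin m) (Fin n) ℝ)
    (hEq : (A - B * K) * S + S * (A - B * K)ᵀ + B₁ * B₁ᵀ = 0) :
    IsHurwitz (A - B * K) := by
  intro μ hμ
  by_contra hre
  push_neg at hre
  obtain ⟨v, hv, hvF⟩ := exists_eigvec (A - B * K) hμ
  set F : Matrix (Fin n) (Fin n) ℝ := A - B * K with hF
  -- complexified Lyapunov equation
  have hEqC : cm F * cm S + cm S * (cm F)ᵀ + cm B₁ * (cm B₁)ᵀ = 0 := by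
    have h := congrArg cm hEq
    rw [cm_add, cm_add, cm_mul, cm_mul, cm_mul, cm_transpose, cm_transpose, cm_zero] at h
    exact h
  set w : Fin p → ℂ := (cm B₁)ᵀ *ᵥ v with hw
  set q : ℂ := star v ⬝ᵥ (cm S *ᵥ v) with hq
  -- quadratic form identity
  have h0 : star v ⬝ᵥ ((cm F * cm S + cm S * (cm F)ᵀ + cm B₁ * (cm B₁)ᵀ) *ᵥ v) = 0 := by
    rw [hEqC]; simp
  have hsv : (cm F)ᵀ *ᵥ star v = star (μ • v) := by
    rw [← cm_transpose, cm_star_mulVec, cm_transpose, hvF]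
  have t1 : star v ⬝ᵥ ((cm F * cm S) *ᵥ v) = (starRingEnd ℂ) μ * q := by
    rw [← mulVec_mulVec, dotProduct_mulVec]
    have : star v ᵥ* cm F = (cm F)ᵀ *ᵥ star v := (mulVec_transpose (cm F) (star v)).symm
    rw [this, hsv, star_smul, smul_dotProduct, hq]
    rfl
  have t2 : star v ⬝ᵥ ((cm S * (cm F)ᵀ) *ᵥ v) = μ * q := by
    rw [← mulVec_mulVec, hvF, mulVec_smul, dotProduct_smul, hq, smul_eq_mul]
  have t3 : star v ⬝ᵥ ((cm B₁ * (cm B₁)ᵀ) *ᵥ v) = star w ⬝ᵥ w := by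
    rw [← mulVec_mulVec, dotProduct_mulVec]
    have h1 : star v ᵥ* cm B₁ = (cm B₁)ᵀ *ᵥ star v := (mulVec_transpose (cm B₁) (star v)).symm
    rw [h1, ← cm_transpose, cm_star_mulVec, cm_transpose, ← hw]
  have key : (starRingEnd ℂ) μ * q + μ * q + star w ⬝ᵥ w = 0 := by
    rw [← t1, ← t2, ← t3, ← dotProduct_add, ← dotProduct_add, ← add_mulVec, ← add_mulVec]
    exact h0
  -- real and imaginary parts
  set a : Fin n → ℝ := fun i => (v i).re with ha
  set b : Fin n → ℝ := fun i => (v i).im with hb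
  have hqre : q.re = a ⬝ᵥ (S *ᵥ a) + b ⬝ᵥ (S *ᵥ b) := by
    have e1 : q = ∑ i, ∑ j, star (v i) * ((S i j : ℂ) * v j) := by
      simp [hq, dotProduct, mulVec, Finset.mul_sum, cm, Complex.coe_algebraMap]
    have e2 : a ⬝ᵥ (S *ᵥ a) + b ⬝ᵥ (S *ᵥ b)
        = ∑ i, ∑ j, ((v i).re * (S i j * (v j).re) + (v i).im * (S i j * (v j).im)) := by
      simp [dotProduct, mulVec, Finset.mul_sum, ha, hb, Finset.sum_add_distrib]
    rw [e1, e2, Complex.re_sum]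
    refine Finset.sum_congr rfl fun i _ => ?_
    rw [Complex.re_sum]
    refine Finset.sum_congr rfl fun j _ => ?_
    simp only [RCLike.star_def, Complex.mul_re, Complex.mul_im, Complex.conj_re,
      Complex.conj_im, Complex.ofReal_re, Complex.ofReal_im]
    ring
  have hqpos : 0 < q.re := by
    have hab : a ≠ 0 ∨ b ≠ 0 := by
      by_contra hc
      push_neg at hc
      apply hv
      ext i
      have h1 : a i = 0 := by rw [hc.1]; rfl
      have h2 : b i = 0 := by rw [hc.2]; rfl
      exact Complex.ext h1 h2
    have key2 : ∀ x : Fin n → ℝ, 0 ≤ x ⬝ᵥ (S *ᵥ x) := by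
      intro x
      have := hS.posSemidef.dotProduct_mulVec_nonneg x
      simpa using this
    have keyp : ∀ x : Fin n → ℝ, x ≠ 0 → 0 < x ⬝ᵥ (S *ᵥ x) := by
      intro x hx
      have := hS.dotProduct_mulVec_pos hx
      simpa using this
    rw [hqre]
    rcases hab with h | h
    · have := keyp a h; have := key2 b; linarith
    · have := keyp b h; have := key2 a; linarith
  have hwr : star w ⬝ᵥ w = ((∑ i, Complex.normSq (w i) : ℝ) : ℂ) := by
    simp only [dotProduct, Pi.star_apply, RCLike.star_def]
    push_cast
    refine Finset.sum_congr rfl fun i _ => ?_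
    rw [← Complex.normSq_eq_conj_mul_self]
  have hkeyre : 2 * μ.re * q.re + (∑ i, Complex.normSq (w i)) = 0 := by
    have := congrArg Complex.re key
    rw [hwr] at this
    simp only [Complex.add_re, Complex.mul_re, Complex.conj_re, Complex.conj_im,
      Complex.ofReal_re, Complex.zero_re] at this
    linarith
  have hsum0 : (∑ i, Complex.normSq (w i)) = 0 := by
    have h1 : 0 ≤ ∑ i, Complex.normSq (w i) :=
      Finset.sum_nonneg fun i _ => Complex.normSq_nonneg _
    nlinarith
  have hw0 : w = 0 := by
    ext i
    have := (Finset.sum_eq_zero_iff_of_nonneg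
      (fun i _ => Complex.normSq_nonneg (w i))).1 hsum0 i (Finset.mem_univ i)
    simpa [Complex.normSq_eq_zero] using this
  -- B^T v = 0
  have hBv : (cm B)ᵀ *ᵥ v = 0 := by
    rw [hBU, cm_mul, transpose_mul, ← mulVec_mulVec, ← hw, hw0, mulVec_zero]
  -- A^T v = μ v
  have hAv : (cm A)ᵀ *ᵥ v = μ • v := by
    have hA : A = F + B * K := by rw [hF]; abel
    rw [hA, cm_add, cm_mul, transpose_add, transpose_mul, add_mulVec, hvF,
      ← mulVec_mulVec, hBv, mulVec_zero, add_zero]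
  -- powers
  have hpow : ∀ k : ℕ, ((cm A)ᵀ) ^ k *ᵥ v = μ ^ k • v := by
    intro k
    induction k with
    | zero => simp
    | succ k ih =>
      rw [pow_succ, ← mulVec_mulVec, hAv, mulVec_smul, ih, smul_smul, ← pow_succ']
  have hAkB : ∀ k : ℕ, (cm (A ^ k * B))ᵀ *ᵥ v = 0 := by
    intro k
    rw [cm_mul, transpose_mul, cm_pow, transpose_pow, ← mulVec_mulVec, hpow, mulVec_smul,
      hBv, smul_zero]
  -- real kernel vectors
  have hcA : ∀ (k : Fin n) (j : Fin m), (∑ i, ((A ^ (k : ℕ) * B) i j : ℂ) * v i) = 0 := by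
    intro k j
    have := congrFun (hAkB (k : ℕ)) j
    simpa [mulVec, dotProduct, cm, transpose_apply] using this
  have hctrbA : (ctrbMatrix A B)ᵀ *ᵥ a = 0 ∧ (ctrbMatrix A B)ᵀ *ᵥ b = 0 := by
    constructor <;> (ext pq; obtain ⟨k, j⟩ := pq)
    · have h := congrArg Complex.re (hcA k j)
      simp only [Complex.re_sum, Complex.mul_re, Complex.ofReal_re, Complex.ofReal_im,
        Complex.zero_re, zero_mul, sub_zero] at h
      simpa [mulVec, dotProduct, ctrbMatrix, transpose_apply, ha, mul_comm] using h
    · have h := congrArg Complex.im (hcA k j)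
      simp only [Complex.im_sum, Complex.mul_im, Complex.ofReal_re, Complex.ofReal_im,
        Complex.zero_im, zero_mul, add_zero] at h
      simpa [mulVec, dotProduct, ctrbMatrix, transpose_apply, hb, mul_comm] using h
  have hab : a ≠ 0 ∨ b ≠ 0 := by
    by_contra hc
    push_neg at hc
    apply hv
    ext i
    have h1 : a i = 0 := by rw [hc.1]; rfl
    have h2 : b i = 0 := by rw [hc.2]; rfl
    exact Complex.ext h1 h2
  have hlt : (ctrbMatrix A B)ᵀ.rank < n := by
    rcases hab with h | h
    · exact rank_lt_of_kernel _ h hctrbA.1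
    · exact rank_lt_of_kernel _ h hctrbA.2
  rw [Matrix.rank_transpose] at hlt
  rw [hAB] at hlt
  exact lt_irrefl n hlt

/-- with `(A,B)` controllable and `range B ⊆ range B₁`, a positive
definite `Σ` can be maintained by a stabilizing constant feedback gain `K` iff
the Lyapunov-like equation `AΣ + ΣAᵀ + B₁B₁ᵀ + BXᵀ + XBᵀ = 0` is solvable for `X`. -/
theorem stmt2 {n m p : ℕ} (A : Matrix (Fin n) (Fin n) ℝ) (B : Matrix (Fin n) (Fin m) ℝ)
    (B₁ : Matrix (Fin n) (Fin p) ℝ) (hAB : IsControllablePair A B)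
    (hBB₁ : Set.range B.mulVec ⊆ Set.range B₁.mulVec)
    (S : Matrix (Fin n) (Fin n) ℝ) (hS : S.PosDef) :
    (∃ K : Matrix (Fin m) (Fin n) ℝ, IsHurwitz (A - B * K) ∧
      (A - B * K) * S + S * (A - B * K)ᵀ + B₁ * B₁ᵀ = 0)
    ↔ (∃ X : Matrix (Fin n) (Fin m) ℝ,
        A * S + S * Aᵀ + B₁ * B₁ᵀ + B * Xᵀ + X * Bᵀ = 0) := by
  have hST : Sᵀ = S := by
    have := hS.1
    rwa [Matrix.IsHermitian, conjTranspose_eq_transpose_of_trivial] at this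
  constructor
  · rintro ⟨K, _, hK⟩
    refine ⟨-(S * Kᵀ), ?_⟩
    rw [sub_mul, transpose_sub, mul_sub, transpose_mul] at hK
    rw [transpose_neg, transpose_mul, transpose_transpose, hST]
    simp only [Matrix.mul_neg, Matrix.neg_mul, Matrix.mul_assoc] at hK ⊢
    rw [← hK]
    abel
  · rintro ⟨X, hX⟩
    -- factor B through B₁
    have hU : ∃ U : Matrix (Fin p) (Fin m) ℝ, B = B₁ * U := by
      choose u hu using fun j : Fin m => hBB₁ ⟨Pi.single j 1, rfl⟩
      refine ⟨Matrix.of fun k j => u j k, ?_⟩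
      ext i j
      have h := congrFun (hu j) i
      rw [mulVec_single_one] at h
      simp only [Matrix.mul_apply, Matrix.of_apply]
      rw [show B i j = B.col j i from rfl, ← h]
      simp [mulVec, dotProduct]
    obtain ⟨U, hU⟩ := hU
    set K : Matrix (Fin m) (Fin n) ℝ := -Xᵀ * S⁻¹ with hKdef
    have hdet : IsUnit S.det := hS.det_pos.ne'.isUnit
    have h1 : S⁻¹ * S = 1 := Matrix.nonsing_inv_mul S hdet
    have h2 : S * S⁻¹ = 1 := Matrix.mul_nonsing_inv S hdet
    have hSinvT : (S⁻¹)ᵀ = S⁻¹ := by rw [Matrix.transpose_nonsing_inv, hST]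
    have hKS : K * S = -Xᵀ := by
      rw [hKdef, Matrix.mul_assoc, h1, Matrix.mul_one]
    have hSKt : S * Kᵀ = -X := by
      rw [hKdef, transpose_mul, transpose_neg, transpose_transpose, ← Matrix.mul_assoc,
        Matrix.transpose_nonsing_inv, hST, h2, Matrix.one_mul]

    have heq : (A - B * K) * S + S * (A - B * K)ᵀ + B₁ * B₁ᵀ = 0 := by
      rw [sub_mul, transpose_sub, mul_sub, transpose_mul, ← Matrix.mul_assoc S Kᵀ Bᵀ, hSKt,
        Matrix.mul_assoc B K S, hKS]
      rw [Matrix.mul_neg, Matrix.neg_mul, sub_neg_eq_add, sub_neg_eq_add, ← hX]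
      abel
    exact ⟨K, hurwitz_of_lyap A B B₁ hAB U hU S hS K heq, heq⟩
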